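/- (Lemma 3, two-point Jacobian estimator, quantitative form.) Let f : ℝ^d → ℝ^m be differentiable with derivative (Jacobian) J_f Lipschitz continuous with constant L_J in the operator norm, and let θ ∈ ℝ^d and α > 0. Let z be a random vector in ℝ^d whose coordinates are mutually independent with mean 0 and variance 1, and suppose E[‖z‖³] < ∞. Then the random d×m matrix z · ((f(θ + αz) − f(θ))/α)ᵀ satisfies ‖E[z · ((f(θ + αz) − f(θ))/α)ᵀ] − J_f(θ)ᵀ‖ ≤ (L_J α / 2) · E[‖z‖³], where the matrix norm is the operator norm induced by the Euclidean norms. In particular, in the limit α → 0 this estimator is an unbiased estimator of J_f(θ)ᵀ. -/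

import Mathlib

open MeasureTheory ProbabilityTheory
open scoped RealInnerProductSpace BigOperators

set_option maxHeartbeats 1000000

lemma taylor_quadratic {E F : Type*} [NormedAddCommGroup E] [InnerProductSpace ℝ E]
    [NormedAddCommGroup F] [NormedSpace ℝ F] [CompleteSpace F]
    (f : E → F) (L : ℝ) (hdiff : Differentiable ℝ f)
    (hL : 0 ≤ L) (hlip : ∀ x y, ‖fderiv ℝ f x - fderiv ℝ f y‖ ≤ L * ‖x - y‖)
    (x h : E) :
    ‖f (x + h) - f x - fderiv ℝ f x h‖ ≤ L / 2 * ‖h‖ ^ 2 := by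
  have Jcont : Continuous (fderiv ℝ f) := by
    refine (LipschitzWith.of_dist_le_mul (K := Real.toNNReal L) fun a b => ?_).continuous
    rw [dist_eq_norm]
    calc ‖fderiv ℝ f a - fderiv ℝ f b‖ ≤ L * ‖a - b‖ := hlip a b
      _ ≤ Real.toNNReal L * ‖a - b‖ := by
          gcongr; exact Real.le_coe_toNNReal L
      _ = Real.toNNReal L * dist a b := by rw [dist_eq_norm]
  have hg : ∀ t : ℝ, HasDerivAt (fun t : ℝ => f (x + t • h))
      ((fderiv ℝ f (x + t • h)) h) t := by
    intro t
    have hu : HasDerivAt (fun t : ℝ => x + t • h) h t := by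
      simpa using ((hasDerivAt_id t).smul_const h).const_add x
    exact (hdiff (x + t • h)).hasFDerivAt.comp_hasDerivAt t hu
  have hcont : Continuous fun t : ℝ => (fderiv ℝ f (x + t • h)) h :=
    (Jcont.comp (continuous_const.add (continuous_id.smul continuous_const))).clm_apply
      continuous_const
  have key : ∫ t in (0:ℝ)..1, (fderiv ℝ f (x + t • h)) h = f (x + h) - f x := by
    have := intervalIntegral.integral_eq_sub_of_hasDerivAt (f := fun t : ℝ => f (x + t • h))
      (fun t _ => hg t) (hcont.intervalIntegrable 0 1)
    simpa using this
  have hsub : f (x + h) - f x - fderiv ℝ f x h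
      = ∫ t in (0:ℝ)..1, ((fderiv ℝ f (x + t • h)) h - (fderiv ℝ f x) h) := by
    rw [intervalIntegral.integral_sub (hcont.intervalIntegrable 0 1)
      intervalIntegrable_const, key, intervalIntegral.integral_const]
    simp
  rw [hsub]
  have hb : ∀ t ∈ Set.uIoc (0:ℝ) 1,
      ‖(fderiv ℝ f (x + t • h)) h - (fderiv ℝ f x) h‖ ≤ (L * ‖h‖ ^ 2) * t := by
    intro t ht
    rw [Set.uIoc_of_le zero_le_one] at ht
    have h1 : ‖(fderiv ℝ f (x + t • h)) h - (fderiv ℝ f x) h‖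
        ≤ ‖fderiv ℝ f (x + t • h) - fderiv ℝ f x‖ * ‖h‖ := by
      simpa using (fderiv ℝ f (x + t • h) - fderiv ℝ f x).le_opNorm h
    calc ‖(fderiv ℝ f (x + t • h)) h - (fderiv ℝ f x) h‖
        ≤ ‖fderiv ℝ f (x + t • h) - fderiv ℝ f x‖ * ‖h‖ := h1
      _ ≤ (L * ‖x + t • h - x‖) * ‖h‖ := by
          exact mul_le_mul_of_nonneg_right (hlip _ _) (norm_nonneg h)
      _ = (L * ‖h‖ ^ 2) * t := by
          rw [add_sub_cancel_left, norm_smul, Real.norm_eq_abs,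
            abs_of_pos ht.1]
          ring
  have hbd := intervalIntegral.norm_integral_le_abs_of_norm_le (μ := volume) (a := (0:ℝ)) (b := 1)
    (g := fun t => (L * ‖h‖ ^ 2) * t)
    ((ae_restrict_iff' measurableSet_uIoc).2 (Filter.Eventually.of_forall hb))
    ((continuous_const.mul continuous_id).intervalIntegrable 0 1)
  have hval : ∫ t in (0:ℝ)..1, (L * ‖h‖ ^ 2) * t = L / 2 * ‖h‖ ^ 2 := by
    rw [intervalIntegral.integral_const_mul, integral_id]
    ring
  rw [hval, abs_of_nonneg (by positivity)] at hbd
  exact hbd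

/-- The outer product `u vᵀ` of `u ∈ ℝ^d` and `v ∈ ℝ^m`, viewed as the linear map
`ℝ^m → ℝ^d`, `e ↦ ⟪v, e⟫ • u`, equipped with the operator norm induced by the
Euclidean norms. -/
noncomputable def outerCLM {d m : ℕ} (u : EuclideanSpace ℝ (Fin d))
    (v : EuclideanSpace ℝ (Fin m)) :
    EuclideanSpace ℝ (Fin m) →L[ℝ] EuclideanSpace ℝ (Fin d) :=
  (innerSL ℝ v).smulRight u

lemma outerCLM_apply {d m : ℕ} (u : EuclideanSpace ℝ (Fin d))
    (v : EuclideanSpace ℝ (Fin m)) (e : EuclideanSpace ℝ (Fin m)) :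
    outerCLM u v e = ⟪v, e⟫ • u := rfl

lemma outerCLM_norm {d m : ℕ} (u : EuclideanSpace ℝ (Fin d))
    (v : EuclideanSpace ℝ (Fin m)) : ‖outerCLM u v‖ = ‖v‖ * ‖u‖ := by
  rw [outerCLM, ContinuousLinearMap.norm_smulRight_apply, innerSL_apply_norm]

lemma outerCLM_add_right {d m : ℕ} (u : EuclideanSpace ℝ (Fin d))
    (v w : EuclideanSpace ℝ (Fin m)) :
    outerCLM u (v + w) = outerCLM u v + outerCLM u w := by
  ext e
  simp [outerCLM_apply, inner_add_left, add_smul]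

lemma outerCLM_continuous {d m : ℕ} :
    Continuous fun p : EuclideanSpace ℝ (Fin d) × EuclideanSpace ℝ (Fin m) =>
      outerCLM p.1 p.2 := by
  have h1 : Continuous fun p : EuclideanSpace ℝ (Fin d) × EuclideanSpace ℝ (Fin m) =>
      ((innerSL ℝ p.2 : EuclideanSpace ℝ (Fin m) →L[ℝ] ℝ), p.1) :=
    ((innerSL ℝ).continuous.comp continuous_snd).prodMk continuous_fst
  exact (isBoundedBilinearMap_smulRight (𝕜 := ℝ)).continuous.comp h1

/-- **Lemma 3, two-point Jacobian estimator, quantitative form.**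
For `f : ℝ^d → ℝ^m` differentiable with `L_J`-Lipschitz Jacobian (in operator
norm), and `z` with mutually independent coordinates of mean `0`, variance `1`
and `E[‖z‖³] < ∞`, the random matrix `z ((f(θ+αz) - f(θ))/α)ᵀ` satisfies
`‖E[z ((f(θ+αz)-f(θ))/α)ᵀ] - J_f(θ)ᵀ‖ ≤ (L_J α / 2) E[‖z‖³]`. -/
theorem stmt4 {Ω : Type*} [MeasurableSpace Ω] {μ : Measure Ω} [IsProbabilityMeasure μ]
    {d m : ℕ} (f : EuclideanSpace ℝ (Fin d) → EuclideanSpace ℝ (Fin m)) (L_J : ℝ)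
    (hdiff : Differentiable ℝ f)
    (hlip : ∀ x y, ‖fderiv ℝ f x - fderiv ℝ f y‖ ≤ L_J * ‖x - y‖)
    (θ : EuclideanSpace ℝ (Fin d)) (α : ℝ) (hα : 0 < α)
    (z : Ω → EuclideanSpace ℝ (Fin d)) (hzm : Measurable z)
    (hindep : iIndepFun (fun i ω => z ω i) μ)
    (hmean : ∀ i, ∫ ω, z ω i ∂μ = 0)
    (hvar : ∀ i, ∫ ω, (z ω i) ^ 2 ∂μ = 1)
    (hmom3 : Integrable (fun ω => ‖z ω‖ ^ 3) μ) :
    ‖(∫ ω, outerCLM (z ω) (α⁻¹ • (f (θ + α • z ω) - f θ)) ∂μ)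
        - ContinuousLinearMap.adjoint (fderiv ℝ f θ)‖
      ≤ L_J * α / 2 * ∫ ω, ‖z ω‖ ^ 3 ∂μ := by
  classical
  set J := fderiv ℝ f θ with hJ
  rcases subsingleton_or_nontrivial (EuclideanSpace ℝ (Fin d)) with hcase | hcase
  · -- trivial case: d = 0
    have hz0 : ∀ ω, z ω = 0 := fun ω => Subsingleton.elim _ _
    have hJ0 : ContinuousLinearMap.adjoint J = 0 := by
      ext e
      have : J = 0 := Subsingleton.elim _ _
      simp [this]
    have houter : ∀ ω, outerCLM (z ω) (α⁻¹ • (f (θ + α • z ω) - f θ)) = 0 := by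
      intro ω
      ext e
      simp [outerCLM_apply, hz0 ω]
    have hnz : ∀ ω, ‖z ω‖ = (0:ℝ) := fun ω => by rw [hz0 ω, norm_zero]
    simp only [houter, hJ0, integral_zero, sub_zero, norm_zero]
    have : ∫ ω, ‖z ω‖ ^ 3 ∂μ = 0 := by
      simp only [hnz]
      simp
    rw [this, mul_zero]
  · -- main case
    have hL : 0 ≤ L_J := by
      obtain ⟨x, hx⟩ := exists_ne (0 : EuclideanSpace ℝ (Fin d))
      have h1 := (norm_nonneg (fderiv ℝ f x - fderiv ℝ f 0)).trans (hlip x 0)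
      have h2 : 0 < ‖x - 0‖ := by simpa using norm_pos_iff.2 hx
      nlinarith
    -- measurability of coordinates
    have hzim : ∀ i, Measurable fun ω => z ω i := fun i => (measurable_pi_apply i).comp (Measurable.comp (WithLp.measurable_ofLp 2 _) hzm)
    have hcoord : ∀ (v : EuclideanSpace ℝ (Fin d)) i, |v i| ≤ ‖v‖ := by
      intro v i
      have := abs_real_inner_le_norm v (EuclideanSpace.single i (1:ℝ))
      simpa [EuclideanSpace.inner_single_right, EuclideanSpace.norm_single] using this
    -- integrability of norms
    have hz1 : Integrable (fun ω => ‖z ω‖) μ := by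
      refine Integrable.mono' ((integrable_const (1:ℝ)).add hmom3)
        hzm.norm.aestronglyMeasurable ?_
      filter_upwards with ω
      rw [Real.norm_eq_abs, abs_of_nonneg (norm_nonneg _)]
      simp only [Pi.add_apply]
      rcases le_total ‖z ω‖ 1 with h | h
      · nlinarith [norm_nonneg (z ω), pow_nonneg (norm_nonneg (z ω)) 3]
      · nlinarith [norm_nonneg (z ω), sq_nonneg (‖z ω‖ - 1), sq_nonneg (‖z ω‖ + 1)]
    have hz2 : Integrable (fun ω => ‖z ω‖ ^ 2) μ := by
      refine Integrable.mono' ((integrable_const (1:ℝ)).add hmom3)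
        (hzm.norm.pow_const 2).aestronglyMeasurable ?_
      filter_upwards with ω
      rw [Real.norm_eq_abs, abs_of_nonneg (by positivity)]
      simp only [Pi.add_apply]
      rcases le_total ‖z ω‖ 1 with h | h
      · nlinarith [norm_nonneg (z ω), pow_nonneg (norm_nonneg (z ω)) 3]
      · nlinarith [norm_nonneg (z ω), sq_nonneg (‖z ω‖ - 1), sq_nonneg (‖z ω‖ + 1)]
    have hzi : ∀ i, Integrable (fun ω => z ω i) μ := by
      intro i
      refine Integrable.mono' hz1 (hzim i).aestronglyMeasurable ?_
      filter_upwards with ω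
      rw [Real.norm_eq_abs]
      exact hcoord (z ω) i
    have hzij : ∀ i j, Integrable (fun ω => z ω i * z ω j) μ := by
      intro i j
      refine Integrable.mono' hz2 ((hzim i).mul (hzim j)).aestronglyMeasurable ?_
      filter_upwards with ω
      rw [Real.norm_eq_abs, abs_mul, pow_two]
      exact mul_le_mul (hcoord (z ω) i) (hcoord (z ω) j) (abs_nonneg _) (norm_nonneg _)
    -- second moments
    have hmom2 : ∀ i j, ∫ ω, z ω i * z ω j ∂μ = if i = j then 1 else 0 := by
      intro i j
      by_cases hij : i = j
      · subst hij
        simp only [if_pos rfl, ← pow_two]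
        exact hvar i
      · rw [if_neg hij]
        have hind := hindep.indepFun hij
        have h := hind.integral_fun_mul_eq_mul_integral (hzi i).aestronglyMeasurable (hzi j).aestronglyMeasurable
        rw [hmean i, zero_mul] at h
        exact h
    -- the decomposition
    set r : Ω → EuclideanSpace ℝ (Fin m) :=
      fun ω => α⁻¹ • (f (θ + α • z ω) - f θ) - J (z ω) with hr
    have hrbound : ∀ ω, ‖r ω‖ ≤ L_J * α / 2 * ‖z ω‖ ^ 2 := by
      intro ω
      have htay := taylor_quadratic f L_J hdiff hL hlip θ (α • z ω)
      have heq : r ω = α⁻¹ • (f (θ + α • z ω) - f θ - J (α • z ω)) := by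
        have hm : J (α • z ω) = α • J (z ω) := J.map_smul α (z ω)
        rw [hr]
        simp only [smul_sub, hm, smul_smul, inv_mul_cancel₀ hα.ne', one_smul]
      rw [heq, norm_smul, Real.norm_eq_abs, abs_of_pos (inv_pos.2 hα)]
      calc α⁻¹ * ‖f (θ + α • z ω) - f θ - J (α • z ω)‖
          ≤ α⁻¹ * (L_J / 2 * ‖α • z ω‖ ^ 2) := by
            exact mul_le_mul_of_nonneg_left htay (le_of_lt (inv_pos.2 hα))
        _ = L_J * α / 2 * ‖z ω‖ ^ 2 := by
            rw [norm_smul, Real.norm_eq_abs, abs_of_pos hα, mul_pow]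
            field_simp
    -- measurability of the integrands
    have hgc : Continuous fun x : EuclideanSpace ℝ (Fin d) => α⁻¹ • (f (θ + α • x) - f θ) :=
      (((hdiff.continuous.comp (continuous_const.add (continuous_id.const_smul α))).sub
        continuous_const).const_smul α⁻¹)
    have hfm : Measurable fun ω => α⁻¹ • (f (θ + α • z ω) - f θ) :=
      hgc.measurable.comp hzm
    have hJzm : Measurable fun ω => J (z ω) := J.continuous.measurable.comp hzm
    have hAm : AEStronglyMeasurable (fun ω => outerCLM (z ω) (J (z ω))) μ := by
      have h2 : AEStronglyMeasurable (fun ω => (z ω, J (z ω))) μ :=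
        hzm.aestronglyMeasurable.prodMk hJzm.aestronglyMeasurable
      have h3 := Continuous.comp_aestronglyMeasurable (outerCLM_continuous (d := d) (m := m)) h2
      exact h3
    have hRm : AEStronglyMeasurable (fun ω => outerCLM (z ω) (r ω)) μ := by
      have h2 : AEStronglyMeasurable (fun ω => (z ω, r ω)) μ :=
        hzm.aestronglyMeasurable.prodMk ((hfm.sub hJzm).aestronglyMeasurable)
      have h3 := Continuous.comp_aestronglyMeasurable (outerCLM_continuous (d := d) (m := m)) h2
      exact h3
    -- integrability
    have hAint : Integrable (fun ω => outerCLM (z ω) (J (z ω))) μ := by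
      refine Integrable.mono' (hz2.const_mul ‖J‖) hAm ?_
      filter_upwards with ω
      rw [outerCLM_norm]
      calc ‖J (z ω)‖ * ‖z ω‖ ≤ (‖J‖ * ‖z ω‖) * ‖z ω‖ :=
            mul_le_mul_of_nonneg_right (J.le_opNorm _) (norm_nonneg _)
        _ = ‖J‖ * ‖z ω‖ ^ 2 := by ring
    have hRint : Integrable (fun ω => outerCLM (z ω) (r ω)) μ := by
      refine Integrable.mono' (hmom3.const_mul (L_J * α / 2)) hRm ?_
      filter_upwards with ω
      rw [outerCLM_norm]
      calc ‖r ω‖ * ‖z ω‖ ≤ (L_J * α / 2 * ‖z ω‖ ^ 2) * ‖z ω‖ :=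
            mul_le_mul_of_nonneg_right (hrbound ω) (norm_nonneg _)
        _ = L_J * α / 2 * ‖z ω‖ ^ 3 := by ring
    have hdecomp : ∀ ω, outerCLM (z ω) (α⁻¹ • (f (θ + α • z ω) - f θ))
        = outerCLM (z ω) (J (z ω)) + outerCLM (z ω) (r ω) := by
      intro ω
      rw [← outerCLM_add_right]
      congr 1
      rw [hr]
      module
    have hTint : Integrable (fun ω => outerCLM (z ω) (α⁻¹ • (f (θ + α • z ω) - f θ))) μ := by
      have : (fun ω => outerCLM (z ω) (α⁻¹ • (f (θ + α • z ω) - f θ)))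
          = fun ω => outerCLM (z ω) (J (z ω)) + outerCLM (z ω) (r ω) := funext hdecomp
      rw [this]
      exact Integrable.add (ε' := EuclideanSpace ℝ (Fin m) →L[ℝ] EuclideanSpace ℝ (Fin d)) hAint hRint
    -- the key expectation identity
    have hkey : ∫ ω, outerCLM (z ω) (J (z ω)) ∂μ = ContinuousLinearMap.adjoint J := by
      refine ContinuousLinearMap.ext fun e => ?_
      set g : EuclideanSpace ℝ (Fin d) := ContinuousLinearMap.adjoint J e with hg
      have h1 : (∫ ω, outerCLM (z ω) (J (z ω)) ∂μ) e = ∫ ω, outerCLM (z ω) (J (z ω)) e ∂μ :=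
        ContinuousLinearMap.integral_apply hAint e
      have happ : Integrable (fun ω => outerCLM (z ω) (J (z ω)) e) μ :=
        hAint.apply_continuousLinearMap e
      have h3 : ∀ ω, ∀ i : Fin d, (outerCLM (z ω) (J (z ω)) e) i
          = ∑ k, g k * (z ω k * z ω i) := by
        intro ω i
        have hv : ⟪J (z ω), e⟫ = ∑ k, z ω k * g k := by
          rw [← ContinuousLinearMap.adjoint_inner_right J (z ω) e, hg, PiLp.inner_apply]
          simp
          exact Finset.sum_congr rfl fun k _ => mul_comm _ _
        calc (outerCLM (z ω) (J (z ω)) e) i = ⟪J (z ω), e⟫ * z ω i := by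
              rw [outerCLM_apply]
              simp [PiLp.smul_apply, smul_eq_mul]
          _ = (∑ k, z ω k * g k) * z ω i := by rw [hv]
          _ = ∑ k, g k * (z ω k * z ω i) := by
              rw [Finset.sum_mul]
              exact Finset.sum_congr rfl fun k _ => by ring
      refine PiLp.ext fun i => ?_
      have h2 : (∫ ω, outerCLM (z ω) (J (z ω)) e ∂μ) i
          = ∫ ω, (outerCLM (z ω) (J (z ω)) e) i ∂μ := by
        have := (EuclideanSpace.proj i : EuclideanSpace ℝ (Fin d) →L[ℝ] ℝ).integral_comp_comm happ
        simpa using this.symm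
      rw [h1, h2]
      calc ∫ ω, (outerCLM (z ω) (J (z ω)) e) i ∂μ
          = ∫ ω, ∑ k, g k * (z ω k * z ω i) ∂μ := by
            refine integral_congr_ae (Filter.Eventually.of_forall fun ω => ?_)
            exact h3 ω i
        _ = ∑ k, ∫ ω, g k * (z ω k * z ω i) ∂μ :=
            integral_finset_sum Finset.univ fun k _ => (hzij k i).const_mul (g k)
        _ = ∑ k, g k * ∫ ω, z ω k * z ω i ∂μ := by
            exact Finset.sum_congr rfl fun k _ => integral_const_mul (g k) _
        _ = g i := by
            simp only [hmom2, mul_ite, mul_one, mul_zero]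
            simp
    -- conclusion
    have hsplit : ∫ ω, outerCLM (z ω) (α⁻¹ • (f (θ + α • z ω) - f θ)) ∂μ
        = ContinuousLinearMap.adjoint J + ∫ ω, outerCLM (z ω) (r ω) ∂μ := by
      rw [show (fun ω => outerCLM (z ω) (α⁻¹ • (f (θ + α • z ω) - f θ)))
          = fun ω => outerCLM (z ω) (J (z ω)) + outerCLM (z ω) (r ω) from funext hdecomp,
        integral_add hAint hRint, hkey]
    rw [hsplit, add_sub_cancel_left]
    calc ‖∫ ω, outerCLM (z ω) (r ω) ∂μ‖ ≤ ∫ ω, ‖outerCLM (z ω) (r ω)‖ ∂μ :=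
          norm_integral_le_integral_norm _
      _ ≤ ∫ ω, L_J * α / 2 * ‖z ω‖ ^ 3 ∂μ := by
          refine integral_mono hRint.norm (hmom3.const_mul _) fun ω => ?_
          rw [outerCLM_norm]
          calc ‖r ω‖ * ‖z ω‖ ≤ (L_J * α / 2 * ‖z ω‖ ^ 2) * ‖z ω‖ :=
                mul_le_mul_of_nonneg_right (hrbound ω) (norm_nonneg _)
            _ = L_J * α / 2 * ‖z ω‖ ^ 3 := by ring
      _ = L_J * α / 2 * ∫ ω, ‖z ω‖ ^ 3 ∂μ := integral_const_mul _ _
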